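/- Let m and n be even positive integers and let R ∈ ℤ^m, S ∈ ℤ^n be nonnegative integer vectors with equal component sums, every component of R at most n and every component of S at most m. There exists an m×n (0,1)-matrix A with row sum vector R and column sum vector S satisfying ρ_π A = A if and only if R and S are palindromic and S ⪯ R*. -/

import Mathlib

/-- The multiset of components of a vector. -/
def vecMS {n : ℕ} (v : Fin n → ℕ) : Multiset ℕ := Multiset.map v Finset.univ.val

/-- The sum of the `k` largest elements of a multiset of natural numbers. -/
def topSum (M : Multiset ℕ) (k : ℕ) : ℕ := ((M.sort (· ≤ ·)).reverse.take k).sum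

/-- `MajorizedBy S R` means `S ⪯ R`: the component sums agree and every
partial sum of the weakly decreasing rearrangement of `R` dominates the
corresponding partial sum for `S`. -/
def MajorizedBy (S R : Multiset ℕ) : Prop := S.sum = R.sum ∧ ∀ k, topSum S k ≤ topSum R k

/-- The conjugate `R*` of (the weakly decreasing rearrangement of) `R`,
viewed as an integer partition: its `j`-th part is the number of components
of `R` that are at least `j`. -/
def conjMS (M : Multiset ℕ) : Multiset ℕ :=
  (Multiset.range M.sum).map fun j => (M.filter (fun x => j + 1 ≤ x)).card

namespace CGR
open Multiset

/-- sum of k largest elements, via min: `msum M k = ∑ min x k`. -/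
def msum (M : Multiset ℕ) (k : ℕ) : ℕ := (M.map (fun x => min x k)).sum

lemma sum_le_sum_of_le {s t : Multiset ℕ} (h : s ≤ t) : s.sum ≤ t.sum := by
  obtain ⟨u, rfl⟩ := Multiset.le_iff_exists_add.1 h
  simp

/-- the descending list of a multiset -/
def descList (M : Multiset ℕ) : List ℕ := (M.sort (· ≤ ·)).reverse

lemma topSum_eq_take (M : Multiset ℕ) (k : ℕ) :
    topSum M k = ((descList M).take k).sum := rfl

lemma descList_coe (M : Multiset ℕ) : (↑(descList M) : Multiset ℕ) = M := by
  rw [descList, Multiset.coe_reverse, Multiset.sort_eq]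

lemma descList_sorted (M : Multiset ℕ) : (descList M).Pairwise (· ≥ ·) := by
  rw [descList, List.pairwise_reverse]
  exact M.pairwise_sort (· ≤ ·)

lemma descList_length (M : Multiset ℕ) : (descList M).length = Multiset.card M := by
  rw [descList, List.length_reverse, Multiset.length_sort]

lemma exists_top (M : Multiset ℕ) (k : ℕ) :
    ∃ T : Multiset ℕ, T ≤ M ∧ Multiset.card T = min k (Multiset.card M)
      ∧ T.sum = topSum M k := by
  refine ⟨↑((descList M).take k), ?_, ?_, ?_⟩
  · calc (↑((descList M).take k) : Multiset ℕ) ≤ ↑(descList M) :=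
        Multiset.coe_le.2 (List.take_sublist k _).subperm
    _ = M := descList_coe M
  · rw [Multiset.coe_card, List.length_take, descList_length]
  · rw [topSum_eq_take, Multiset.sum_coe]

lemma exists_max {M : Multiset ℕ} (h : M ≠ 0) : ∃ a ∈ M, ∀ x ∈ M, x ≤ a := by
  induction M using Multiset.induction_on with
  | empty => exact absurd rfl h
  | cons a M ih =>
    rcases eq_or_ne M 0 with rfl | hM
    · exact ⟨a, Multiset.mem_cons_self a 0, by simp⟩
    · obtain ⟨b, hb, hmax⟩ := ih hM
      refine ⟨max a b, ?_, ?_⟩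
      · rcases le_total a b with h' | h'
        · simpa [max_eq_right h'] using Or.inr hb
        · simp [max_eq_left h']
      · intro x hx
        rcases Multiset.mem_cons.1 hx with rfl | hx
        · exact le_max_left _ _
        · exact le_trans (hmax x hx) (le_max_right _ _)

lemma erase_le_erase_of_max {T M : Multiset ℕ} {a b : ℕ} (hTM : T ≤ M)
    (hbT : b ∈ T) (hbmax : ∀ x ∈ T, x ≤ b) (hamax : ∀ x ∈ M, x ≤ a) :
    T.erase b ≤ M.erase a := by
  rw [Multiset.le_iff_count]
  intro x
  by_cases hx : x = a
  · subst hx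
    by_cases haT : x ∈ T
    · have hba : b = x := le_antisymm (hamax b (Multiset.mem_of_le hTM hbT)) (hbmax x haT)
      subst hba
      rw [Multiset.count_erase_self, Multiset.count_erase_self]
      exact Nat.sub_le_sub_right (Multiset.le_iff_count.1 hTM b) 1
    · have : Multiset.count x (T.erase b) = 0 := by
        refine Nat.eq_zero_of_le_zero (le_trans (Multiset.count_le_of_le x (Multiset.erase_le b T)) ?_)
        simp [Multiset.count_eq_zero_of_notMem haT]
      simp [this]
  · rw [Multiset.count_erase_of_ne hx]
    calc Multiset.count x (T.erase b) ≤ Multiset.count x T :=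
          Multiset.count_le_of_le x (Multiset.erase_le b T)
    _ ≤ Multiset.count x M := Multiset.le_iff_count.1 hTM x

/-- descList of M starts with any max, followed by descList of the rest. -/
lemma topSum_succ_of_max {M : Multiset ℕ} {a : ℕ} (ha : a ∈ M)
    (hmax : ∀ x ∈ M, x ≤ a) (k : ℕ) :
    topSum M (k + 1) = a + topSum (M.erase a) k := by
  obtain ⟨b, t, hbt⟩ : ∃ b t, descList M = b :: t := by
    cases h : descList M with
    | nil => 
      exfalso
      have : M = 0 := by
        have := descList_coe M
        rw [h] at this
        simpa using this.symm
      simp [this] at ha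
    | cons b t => exact ⟨b, t, rfl⟩
  have hcoe : (↑(b :: t) : Multiset ℕ) = M := by rw [← hbt]; exact descList_coe M
  have hbM : b ∈ M := by rw [← hcoe]; simp
  have hsort : (b :: t).Pairwise (· ≥ ·) := by rw [← hbt]; exact descList_sorted M
  have hba : b = a := by
    refine le_antisymm (hmax b hbM) ?_
    have haM : a ∈ (b :: t) := by
      have : a ∈ (↑(b :: t) : Multiset ℕ) := by rw [hcoe]; exact ha
      exact Multiset.mem_coe.1 this
    rcases List.mem_cons.1 haM with rfl | h
    · exact le_refl a
    · exact (List.pairwise_cons.1 hsort).1 a h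
  subst hba
  have herase : M.erase b = ↑t := by
    rw [← hcoe, ← Multiset.cons_coe]
    exact Multiset.erase_cons_head b (↑t)
  have htd : descList (M.erase b) = t := by
    refine List.Perm.eq_of_pairwise' (descList_sorted _) ((List.pairwise_cons.1 hsort).2) ?_
    rw [← Multiset.coe_eq_coe, descList_coe, herase]
  rw [topSum_eq_take, topSum_eq_take, hbt, htd, List.take_succ_cons, List.sum_cons]

lemma sum_le_topSum : ∀ (k : ℕ) (T M : Multiset ℕ), T ≤ M → Multiset.card T ≤ k →
    T.sum ≤ topSum M k := by
  intro k
  induction k with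
  | zero =>
    intro T M _ hcard
    have : T = 0 := Multiset.card_eq_zero.1 (Nat.le_zero.1 hcard)
    simp [this]
  | succ k ih =>
    intro T M hTM hcard
    rcases eq_or_ne T 0 with rfl | hT
    · simp
    have hM : M ≠ 0 := by
      rintro rfl
      exact hT (Multiset.le_zero.1 hTM)
    obtain ⟨a, haM, hamax⟩ := exists_max hM
    obtain ⟨b, hbT, hbmax⟩ := exists_max hT
    have h1 : T.erase b ≤ M.erase a := erase_le_erase_of_max hTM hbT hbmax hamax
    have h2 : Multiset.card (T.erase b) ≤ k := by
      rw [Multiset.card_erase_of_mem hbT, Nat.pred_eq_sub_one]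
      omega
    have h3 : (T.erase b).sum ≤ topSum (M.erase a) k := ih _ _ h1 h2
    have h4 : T.sum = b + (T.erase b).sum := by
      conv_lhs => rw [← Multiset.cons_erase hbT]
      rw [Multiset.sum_cons]
    rw [h4, topSum_succ_of_max haM hamax]
    exact Nat.add_le_add (hamax b (Multiset.mem_of_le hTM hbT)) h3

lemma topSum_le_of_forall {M : Multiset ℕ} {k B : ℕ}
    (h : ∀ T ≤ M, Multiset.card T ≤ k → T.sum ≤ B) : topSum M k ≤ B := by
  obtain ⟨T, hTM, hcard, hsum⟩ := exists_top M k
  rw [← hsum]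
  exact h T hTM (by omega)

lemma topSum_mono_left {M' M : Multiset ℕ} (h : M' ≤ M) (k : ℕ) :
    topSum M' k ≤ topSum M k := by
  refine topSum_le_of_forall fun T hT hc => sum_le_topSum k T M (hT.trans h) hc

lemma topSum_mono_right (M : Multiset ℕ) {k k' : ℕ} (h : k ≤ k') :
    topSum M k ≤ topSum M k' := by
  obtain ⟨T, hTM, hcard, hsum⟩ := exists_top M k
  rw [← hsum]
  exact sum_le_topSum k' T M hTM (by omega)

lemma topSum_le_sum (M : Multiset ℕ) (k : ℕ) : topSum M k ≤ M.sum := by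
  refine topSum_le_of_forall fun T hT _ => sum_le_sum_of_le hT

lemma add_topSum_erase_le {M : Multiset ℕ} {a : ℕ} (ha : a ∈ M) (k : ℕ) :
    a + topSum (M.erase a) k ≤ topSum M (k + 1) := by
  obtain ⟨T, hTM, hcard, hsum⟩ := exists_top (M.erase a) k
  have h1 : a ::ₘ T ≤ M := by
    calc a ::ₘ T ≤ a ::ₘ M.erase a := Multiset.cons_le_cons a hTM
    _ = M := Multiset.cons_erase ha
  have h2 : Multiset.card (a ::ₘ T) ≤ k + 1 := by
    rw [Multiset.card_cons]
    omega
  calc a + topSum (M.erase a) k = (a ::ₘ T).sum := by rw [Multiset.sum_cons, hsum]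
  _ ≤ topSum M (k + 1) := sum_le_topSum _ _ _ h1 h2

lemma topSum_cons_zero (M : Multiset ℕ) (k : ℕ) :
    topSum (0 ::ₘ M) k = topSum M k := by
  refine le_antisymm ?_ (topSum_mono_left (Multiset.le_cons_self M 0) k)
  refine topSum_le_of_forall fun T hT hc => ?_
  have h1 : T.erase 0 ≤ M := by
    have := Multiset.erase_le_erase 0 hT
    rwa [Multiset.erase_cons_head] at this
  have h2 : (T.erase 0).sum = T.sum := by
    by_cases h0 : 0 ∈ T
    · conv_rhs => rw [← Multiset.cons_erase h0]
      rw [Multiset.sum_cons, Nat.zero_add]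
    · rw [Multiset.erase_of_notMem h0]
  have h3 : Multiset.card (T.erase 0) ≤ k := le_trans (Multiset.card_erase_le) hc
  rw [← h2]
  exact sum_le_topSum k _ M h1 h3

/-- pointwise split: x = min x k + (x - k) -/
lemma msum_add_msub (M : Multiset ℕ) (k : ℕ) :
    msum M k + (M.map (fun x => x - k)).sum = M.sum := by
  rw [msum, ← Multiset.sum_map_add]
  congr 1
  rw [Multiset.map_congr rfl (fun x _ => by omega : ∀ x ∈ M, min x k + (x - k) = x)]
  exact Multiset.map_id M

lemma msum_le_card_mul (T : Multiset ℕ) (k : ℕ) : msum T k ≤ Multiset.card T * k := by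
  rw [msum]
  calc (T.map (fun x => min x k)).sum ≤ (T.map (fun _ => k)).sum := by
        apply Multiset.sum_map_le_sum_map
        intro x _
        exact min_le_right x k
  _ = Multiset.card T * k := by rw [Multiset.map_const', Multiset.sum_replicate, smul_eq_mul]

/-- key symmetric bound: topSum M l + msum M k ≤ l * k + M.sum -/
lemma topSum_add_msum_le (M : Multiset ℕ) (l k : ℕ) :
    topSum M l + msum M k ≤ l * k + M.sum := by
  obtain ⟨T, hTM, hcard, hsum⟩ := exists_top M l
  have h1 : T.sum ≤ l * k + (M.map (fun x => x - k)).sum := by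
    calc T.sum = msum T k + (T.map (fun x => x - k)).sum := (msum_add_msub T k).symm
    _ ≤ Multiset.card T * k + (M.map (fun x => x - k)).sum := by
        refine Nat.add_le_add (msum_le_card_mul T k) (sum_le_sum_of_le (Multiset.map_le_map hTM))
    _ ≤ l * k + (M.map (fun x => x - k)).sum := by
        have : Multiset.card T ≤ l := by omega
        exact Nat.add_le_add_right (Nat.mul_le_mul_right k this) _
  calc topSum M l + msum M k = T.sum + msum M k := by rw [hsum]
  _ ≤ (l * k + (M.map (fun x => x - k)).sum) + msum M k := Nat.add_le_add_right h1 _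
  _ = l * k + M.sum := by rw [Nat.add_assoc, Nat.add_comm _ (msum M k), msum_add_msub]

lemma msum_add_filter (B : Multiset ℕ) (k : ℕ) :
    msum B k + (B.filter (fun x => k + 1 ≤ x)).sum
      = k * Multiset.card (B.filter (fun x => k + 1 ≤ x)) + B.sum := by
  classical
  set F := B.filter (fun x => k + 1 ≤ x) with hF
  set G := B.filter (fun x => ¬ (k + 1 ≤ x)) with hG
  have hFG : F + G = B := Multiset.filter_add_not _ B
  have h1 : msum B k = msum F k + msum G k := by
    rw [msum, ← hFG, Multiset.map_add, Multiset.sum_add, msum, msum]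
  have h2 : msum F k = Multiset.card F * k := by
    have he : F.map (fun x => min x k) = F.map (fun _ => k) :=
      Multiset.map_congr rfl (fun x hx => by have := Multiset.of_mem_filter hx; omega)
    rw [msum, he, Multiset.map_const', Multiset.sum_replicate, smul_eq_mul]
  have h3 : msum G k = G.sum := by
    have he : G.map (fun x => min x k) = G.map (fun x => x) :=
      Multiset.map_congr rfl (fun x hx => by have := Multiset.of_mem_filter hx; omega)
    rw [msum, he, Multiset.map_id']
  have h4 : B.sum = F.sum + G.sum := by rw [← hFG, Multiset.sum_add]
  rw [h1, h2, h3, h4]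
  ring

/-- Duality: `A ⪯ B*` implies `B ⪯ A*` for equal sums. -/
lemma dual_maj {A B : Multiset ℕ} (hsum : A.sum = B.sum)
    (h : ∀ k, topSum A k ≤ msum B k) : ∀ k, topSum B k ≤ msum A k := by
  intro k
  classical
  set F := A.filter (fun x => k + 1 ≤ x) with hFdef
  set l := Multiset.card F with hldef
  have hF1 : F.sum ≤ topSum A l :=
    sum_le_topSum l F A (Multiset.filter_le _ A) (le_refl _)
  have key : topSum B k + topSum A l ≤ k * l + A.sum := by
    calc topSum B k + topSum A l ≤ topSum B k + msum B l := Nat.add_le_add_left (h l) _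
    _ ≤ k * l + B.sum := topSum_add_msum_le B k l
    _ = k * l + A.sum := by rw [hsum]
  have heq : msum A k + F.sum = k * l + A.sum := msum_add_filter A k
  have : topSum B k + F.sum ≤ msum A k + F.sum := by
    calc topSum B k + F.sum ≤ topSum B k + topSum A l := Nat.add_le_add_left hF1 _
    _ ≤ k * l + A.sum := key
    _ = msum A k + F.sum := heq.symm
  exact Nat.le_of_add_le_add_right this

/-- pullback of a sub-multiset of a map -/
lemma exists_le_of_le_map {α : Type*} [DecidableEq α] {f : α → ℕ} :
    ∀ (T : Multiset ℕ) (s : Multiset α), T ≤ s.map f → ∃ J ≤ s, T = J.map f := by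
  intro T
  induction T using Multiset.induction_on with
  | empty => exact fun s _ => ⟨0, Multiset.zero_le _, rfl⟩
  | cons a T ih =>
    intro s h
    have ha : a ∈ s.map f := Multiset.mem_of_le h (Multiset.mem_cons_self a T)
    obtain ⟨b, hb, rfl⟩ := Multiset.mem_map.1 ha
    have h2 : T ≤ (s.map f).erase (f b) := by
      have := Multiset.erase_le_erase (f b) h
      rwa [Multiset.erase_cons_head] at this
    have h3 : (s.map f).erase (f b) = (s.erase b).map f := by
      conv_lhs => rw [← Multiset.cons_erase hb, Multiset.map_cons, Multiset.erase_cons_head]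
    rw [h3] at h2
    obtain ⟨J, hJ, rfl⟩ := ih _ h2
    refine ⟨b ::ₘ J, ?_, by rw [Multiset.map_cons]⟩
    calc b ::ₘ J ≤ b ::ₘ s.erase b := Multiset.cons_le_cons b hJ
    _ = s := Multiset.cons_erase hb

/-- rearrangement: sum of an antitone `f` over a finset of naturals is at most
the sum over an initial segment of the same size.  -/
lemma antitone_finset_sum_le {f : ℕ → ℕ} (hf : ∀ {a b : ℕ}, a ≤ b → f b ≤ f a) :
    ∀ (c : ℕ) (J : Finset ℕ), J.card = c → ∑ j ∈ J, f j ≤ ∑ j ∈ Finset.range c, f j := by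
  intro c
  induction c with
  | zero =>
    intro J hJ
    rw [Finset.card_eq_zero.1 hJ]
    simp
  | succ c ih =>
    intro J hJ
    have hne : J.Nonempty := by
      rw [← Finset.card_pos, hJ]; omega
    set b := J.max' hne with hb
    have hcb : c ≤ b := by
      have hsub : J ⊆ Finset.range (b + 1) := by
        intro x hx
        rw [Finset.mem_range]
        have := Finset.le_max' J x hx
        omega
      have := Finset.card_le_card hsub
      rw [hJ, Finset.card_range] at this
      omega
    have herase : (J.erase b).card = c := by
      rw [Finset.card_erase_of_mem (J.max'_mem hne), hJ]
      omega
    calc ∑ j ∈ J, f j = f b + ∑ j ∈ J.erase b, f j :=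
          (Finset.add_sum_erase J f (J.max'_mem hne)).symm
    _ ≤ f c + ∑ j ∈ Finset.range c, f j := Nat.add_le_add (hf hcb) (ih _ herase)
    _ = ∑ j ∈ Finset.range (c + 1), f j := by rw [Finset.sum_range_succ_comm]

lemma range_coe (n : ℕ) : Multiset.range n = (↑(List.range n) : Multiset ℕ) := rfl

lemma sum_map_range (f : ℕ → ℕ) (c : ℕ) :
    ((Multiset.range c).map f).sum = ∑ j ∈ Finset.range c, f j := rfl

/-- topSum of an antitone enumeration is the initial-segment sum. -/
lemma topSum_antitone_map {f : ℕ → ℕ} (hf : ∀ {a b : ℕ}, a ≤ b → f b ≤ f a) (N k : ℕ) :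
    topSum ((Multiset.range N).map f) k = ∑ j ∈ Finset.range (min k N), f j := by
  refine le_antisymm ?_ ?_
  · obtain ⟨T, hTM, hcard, hsum⟩ := exists_top ((Multiset.range N).map f) k
    rw [← hsum]
    obtain ⟨J, hJ, rfl⟩ := exists_le_of_le_map T _ hTM
    have hnodup : J.Nodup := Multiset.nodup_of_le hJ (Multiset.nodup_range N)
    have hcard' : (⟨J, hnodup⟩ : Finset ℕ).card = min k N := by
      rw [Finset.card_mk]
      simpa using hcard
    have : (J.map f).sum = ∑ j ∈ (⟨J, hnodup⟩ : Finset ℕ), f j := rfl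
    rw [this]
    exact antitone_finset_sum_le hf (min k N) _ hcard'
  · have hle : (Multiset.range (min k N)).map f ≤ (Multiset.range N).map f := by
      refine Multiset.map_le_map ?_
      rw [range_coe, range_coe]
      exact Multiset.coe_le.2 (List.range_sublist.2 (min_le_right k N)).subperm
    have hcard : Multiset.card ((Multiset.range (min k N)).map f) ≤ k := by
      rw [Multiset.card_map, Multiset.card_range]; omega
    have := sum_le_topSum k _ _ hle hcard
    rwa [sum_map_range] at this

lemma msum_cons (a k : ℕ) (M : Multiset ℕ) : msum (a ::ₘ M) k = min a k + msum M k := by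
  simp [msum]

/-- counting identity: ∑_{j<K} #{x ∈ M : x ≥ j+1} = ∑_{x∈M} min x K -/
lemma sum_card_filter (K : ℕ) (M : Multiset ℕ) :
    ∑ j ∈ Finset.range K, Multiset.card (M.filter (fun x => j + 1 ≤ x)) = msum M K := by
  induction M using Multiset.induction_on with
  | empty => simp [msum]
  | cons a M ih =>
    have hstep : ∀ j, Multiset.card ((a ::ₘ M).filter (fun x => j + 1 ≤ x))
        = (if j + 1 ≤ a then 1 else 0) + Multiset.card (M.filter (fun x => j + 1 ≤ x)) := by
      intro j
      rw [Multiset.filter_cons, Multiset.card_add]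
      congr 1
      split <;> simp
    have hmin : ∀ K' : ℕ, ∑ j ∈ Finset.range K', (if j + 1 ≤ a then 1 else 0) = min a K' := by
      intro K'
      induction K' with
      | zero => simp
      | succ K' ih2 =>
        rw [Finset.sum_range_succ, ih2]
        split <;> omega
    calc ∑ j ∈ Finset.range K, Multiset.card ((a ::ₘ M).filter (fun x => j + 1 ≤ x))
        = ∑ j ∈ Finset.range K, ((if j + 1 ≤ a then 1 else 0)
            + Multiset.card (M.filter (fun x => j + 1 ≤ x))) := by
          exact Finset.sum_congr rfl fun j _ => hstep j
    _ = min a K + msum M K := by rw [Finset.sum_add_distrib, hmin, ih]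
    _ = msum (a ::ₘ M) K := (msum_cons a K M).symm

lemma mem_le_sum {M : Multiset ℕ} {x : ℕ} (hx : x ∈ M) : x ≤ M.sum := by
  obtain ⟨M', rfl⟩ := Multiset.exists_cons_of_mem hx
  rw [Multiset.sum_cons]
  omega

lemma msum_eq_of_ge {M : Multiset ℕ} {k k' : ℕ} (h : M.sum ≤ k) (h' : M.sum ≤ k') :
    msum M k = msum M k' := by
  rw [msum, msum]
  congr 1
  refine Multiset.map_congr rfl fun x hx => ?_
  have := mem_le_sum hx
  omega

lemma card_filter_antitone (M : Multiset ℕ) {a b : ℕ} (h : a ≤ b) :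
    Multiset.card (M.filter (fun x => b + 1 ≤ x)) ≤
      Multiset.card (M.filter (fun x => a + 1 ≤ x)) := by
  refine Multiset.card_le_card ?_
  rw [Multiset.le_iff_count]
  intro x
  rw [Multiset.count_filter, Multiset.count_filter]
  split
  · split
    · exact le_refl _
    · omega
  · omega

/-- `topSum` of the conjugate equals `msum`. -/
lemma topSum_conj (M : Multiset ℕ) (k : ℕ) : topSum (conjMS M) k = msum M k := by
  rw [conjMS, topSum_antitone_map (fun {a b} h => card_filter_antitone M h) M.sum k,
    sum_card_filter]
  rcases le_total k M.sum with h | h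
  · rw [min_eq_left h]
  · rw [min_eq_right h]
    exact msum_eq_of_ge (le_refl _) h

lemma msum_self (M : Multiset ℕ) : msum M M.sum = M.sum := by
  rw [msum]
  have : M.map (fun x => min x M.sum) = M.map (fun x => x) :=
    Multiset.map_congr rfl fun x hx => by have := mem_le_sum hx; omega
  rw [this, Multiset.map_id']

lemma conjMS_sum (M : Multiset ℕ) : (conjMS M).sum = M.sum := by
  rw [conjMS, sum_map_range, sum_card_filter, msum_self]

lemma conjMS_card (M : Multiset ℕ) : Multiset.card (conjMS M) = M.sum := by
  rw [conjMS, Multiset.card_map, Multiset.card_range]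

lemma vecMS_sum {n : ℕ} (v : Fin n → ℕ) : (vecMS v).sum = ∑ i, v i := rfl

lemma msum_vecMS {n : ℕ} (v : Fin n → ℕ) (k : ℕ) :
    msum (vecMS v) k = ∑ i, min (v i) k := by
  rw [msum, vecMS, Multiset.map_map]
  rfl

lemma mem_vecMS {n : ℕ} (v : Fin n → ℕ) (j : Fin n) : v j ∈ vecMS v :=
  Multiset.mem_map_of_mem v (Finset.mem_univ j)

lemma exists_topset {m : ℕ} (f : Fin m → ℕ) :
    ∀ s, s ≤ m → ∃ T : Finset (Fin m), T.card = s ∧ ∀ i ∈ T, ∀ i' ∉ T, f i' ≤ f i := by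
  intro s
  induction s with
  | zero => exact fun _ => ⟨∅, Finset.card_empty, by simp⟩
  | succ s ih =>
    intro hs
    obtain ⟨T, hTcard, hTtop⟩ := ih (by omega)
    have hne : (Tᶜ : Finset (Fin m)).Nonempty := by
      rw [← Finset.card_pos, Finset.card_compl, hTcard, Fintype.card_fin]
      omega
    obtain ⟨b, hb, hbmax⟩ := Finset.exists_max_image Tᶜ f hne
    have hbT : b ∉ T := Finset.mem_compl.1 hb
    refine ⟨insert b T, ?_, ?_⟩
    · rw [Finset.card_insert_of_notMem hbT, hTcard]
    · intro i hi i' hi'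
      have hi'T : i' ∉ T := fun h => hi' (Finset.mem_insert_of_mem h)
      rcases Finset.mem_insert.1 hi with rfl | hiT
      · exact hbmax i' (Finset.mem_compl.2 hi'T)
      · exact hTtop i hiT i' hi'T

/-- **Gale–Ryser, sufficiency.** -/
theorem GR : ∀ (N : ℕ) {m n : ℕ} (R : Fin m → ℕ) (S : Fin n → ℕ),
    (∑ j, S j = N) → (∀ j, S j ≤ m) → (∑ i, R i = ∑ j, S j) →
    (∀ k, topSum (vecMS S) k ≤ ∑ i, min (R i) k) →
    ∃ A : Matrix (Fin m) (Fin n) ℕ,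
      (∀ i j, A i j = 0 ∨ A i j = 1) ∧ (∀ i, ∑ j, A i j = R i) ∧
        (∀ j, ∑ i, A i j = S j) := by
  intro N
  induction N using Nat.strong_induction_on with
  | _ N ih =>
  intro m n R S hN hSle hsum hmaj
  classical
  rcases Nat.eq_zero_or_pos N with rfl | hNpos
  · have hS0 : ∀ j, S j = 0 := fun j =>
      Finset.sum_eq_zero_iff.1 hN j (Finset.mem_univ j)
    have hR0 : ∀ i, R i = 0 := fun i =>
      Finset.sum_eq_zero_iff.1 (by rw [hsum, hN]) i (Finset.mem_univ i)
    exact ⟨fun _ _ => 0, fun i j => Or.inl rfl, fun i => by simp [hR0 i],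
      fun j => by simp [hS0 j]⟩
  -- main case
  have hex : ∃ j, S j ≠ 0 := by
    by_contra h
    push_neg at h
    rw [Finset.sum_eq_zero (fun j _ => h j)] at hN
    omega
  obtain ⟨j0, hj0⟩ := hex
  obtain ⟨js, _, hjmax⟩ := Finset.exists_max_image Finset.univ S ⟨j0, Finset.mem_univ j0⟩
  set s := S js with hsdef
  have hs1 : 1 ≤ s := by
    have := hjmax j0 (Finset.mem_univ j0)
    omega
  obtain ⟨T, hTcard, hTtop⟩ := exists_topset R s (hSle js)
  -- sum of min(R i) 1 identity
  have hmin1 : ∑ i, min (R i) 1 = (Finset.univ.filter (fun i => 1 ≤ R i)).card := by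
    rw [Finset.card_filter]
    refine Finset.sum_congr rfl fun i _ => ?_
    by_cases h : 1 ≤ R i
    · rw [if_pos h]; omega
    · rw [if_neg h]; omega
  have hfs : s ≤ (Finset.univ.filter (fun i => 1 ≤ R i)).card := by
    have h1 : s ≤ topSum (vecMS S) 1 := by
      have := sum_le_topSum 1 {s} (vecMS S)
        (Multiset.singleton_le.2 (mem_vecMS S js)) (by simp)
      simpa using this
    have := hmaj 1
    omega
  have hT1 : ∀ i ∈ T, 1 ≤ R i := by
    intro i hi
    by_contra h0
    have hRi : R i = 0 := by omega
    have hsub : (Finset.univ.filter (fun i => 1 ≤ R i)) ⊆ T.erase i := by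
      intro i' hi'
      have h1 : 1 ≤ R i' := (Finset.mem_filter.1 hi').2
      have hi'T : i' ∈ T := by
        by_contra hnot
        have := hTtop i hi i' hnot
        omega
      refine Finset.mem_erase.2 ⟨?_, hi'T⟩
      rintro rfl
      omega
    have hcard2 := Finset.card_le_card hsub
    rw [Finset.card_erase_of_mem hi, hTcard] at hcard2
    have := Nat.le_trans hfs hcard2
    omega
  set R' := fun i => if i ∈ T then R i - 1 else R i with hR'def
  set S' := fun j => if j = js then 0 else S j with hS'def
  have hptR : ∀ i, R' i + (if i ∈ T then 1 else 0) = R i := by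
    intro i
    by_cases hi : i ∈ T
    · have := hT1 i hi
      simp only [hR'def, if_pos hi]
      omega
    · simp [hR'def, if_neg hi]
  have hsumT : ∑ i, (if i ∈ T then (1:ℕ) else 0) = s := by
    rw [Finset.sum_ite_mem, Finset.univ_inter, Finset.sum_const, smul_eq_mul, mul_one, hTcard]
  have hR'sum : ∑ i, R' i + s = ∑ i, R i := by
    rw [← hsumT, ← Finset.sum_add_distrib]
    exact Finset.sum_congr rfl fun i _ => hptR i
  have hS'sum : ∑ j, S' j + s = ∑ j, S j := by
    rw [← Finset.add_sum_erase Finset.univ S (Finset.mem_univ js),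
      ← Finset.add_sum_erase Finset.univ S' (Finset.mem_univ js)]
    have h1 : S' js = 0 := by simp [hS'def]
    have h2 : ∑ j ∈ Finset.univ.erase js, S' j = ∑ j ∈ Finset.univ.erase js, S j :=
      Finset.sum_congr rfl fun j hj => by
        simp [hS'def, (Finset.mem_erase.1 hj).1]
    rw [h1, h2]
    omega
  -- multiset identity
  have huniv : (Finset.univ.val : Multiset (Fin n)) = js ::ₘ Finset.univ.val.erase js :=
    (Multiset.cons_erase (Finset.mem_univ js : js ∈ Finset.univ.val)).symm
  have hvec : vecMS S' = 0 ::ₘ (vecMS S).erase s := by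
    have h1 : vecMS S' = 0 ::ₘ Multiset.map S' (Finset.univ.val.erase js) := by
      have : vecMS S' = S' js ::ₘ Multiset.map S' (Finset.univ.val.erase js) := by
        rw [vecMS]
        conv_lhs => rw [huniv]
        rw [Multiset.map_cons]
      rw [this]
      congr 1
      simp [hS'def]
    have h2 : Multiset.map S' (Finset.univ.val.erase js)
        = Multiset.map S (Finset.univ.val.erase js) := by
      refine Multiset.map_congr rfl fun j hj => ?_
      have hne : j ≠ js := (((Finset.univ.nodup).mem_erase_iff).1 hj).1
      simp [hS'def, hne]
    have h3 : (vecMS S).erase s = Multiset.map S (Finset.univ.val.erase js) := by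
      have h4 : vecMS S = s ::ₘ Multiset.map S (Finset.univ.val.erase js) := by
        rw [vecMS]
        conv_lhs => rw [huniv]
        rw [Multiset.map_cons, hsdef]
      rw [h4, Multiset.erase_cons_head]
    rw [h1, h2, ← h3]
  have hmaj' : ∀ k, topSum (vecMS S') k ≤ ∑ i, min (R' i) k := by
    intro k
    rw [hvec, topSum_cons_zero]
    by_cases hc : ∀ i ∈ T, k + 1 ≤ R i
    · have hsame : ∀ i, min (R' i) k = min (R i) k := by
        intro i
        by_cases hi : i ∈ T
        · have := hc i hi
          simp only [hR'def, if_pos hi]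
          omega
        · simp [hR'def, if_neg hi]
      calc topSum ((vecMS S).erase s) k ≤ topSum (vecMS S) k :=
            topSum_mono_left (Multiset.erase_le s _) k
      _ ≤ ∑ i, min (R i) k := hmaj k
      _ = ∑ i, min (R' i) k := by
          exact Finset.sum_congr rfl fun i _ => (hsame i).symm
    · push_neg at hc
      obtain ⟨i0, hi0T, hi0⟩ := hc
      have key1 : s + topSum ((vecMS S).erase s) k ≤ topSum (vecMS S) (k + 1) :=
        add_topSum_erase_le (mem_vecMS S js) k
      have key3 : ∑ i, min (R i) (k + 1) = ∑ i, min (R' i) k + s := by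
        rw [← hsumT, ← Finset.sum_add_distrib]
        refine Finset.sum_congr rfl fun i _ => ?_
        by_cases hi : i ∈ T
        · have := hT1 i hi
          simp only [hR'def, if_pos hi]
          omega
        · have hik : R i ≤ k := le_trans (hTtop i0 hi0T i hi) (by omega)
          simp only [hR'def, if_neg hi]
          omega
      have key2 := hmaj (k + 1)
      omega
  -- apply induction hypothesis
  have hS'N : ∑ j, S' j = N - s := by omega
  obtain ⟨A', hA'01, hA'row, hA'col⟩ := ih (N - s) (by omega) R' S' hS'N
    (fun j => le_trans (by by_cases h : j = js <;> simp [hS'def, h]) (hSle j))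
    (by omega) hmaj'
  have hcol0 : ∀ i, A' i js = 0 := by
    intro i
    have h0 : ∑ i, A' i js = 0 := by
      rw [hA'col js]
      simp [hS'def]
    exact Finset.sum_eq_zero_iff.1 h0 i (Finset.mem_univ i)
  refine ⟨fun i j => A' i j + if j = js ∧ i ∈ T then 1 else 0, ?_, ?_, ?_⟩
  · intro i j
    dsimp only
    by_cases hj : j = js
    · subst hj
      rw [hcol0 i]
      by_cases hi : i ∈ T <;> simp [hi]
    · simp [hj, hA'01 i j]
  · intro i
    dsimp only
    rw [Finset.sum_add_distrib, hA'row i]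
    have : ∑ j, (if j = js ∧ i ∈ T then (1:ℕ) else 0) = if i ∈ T then 1 else 0 := by
      by_cases hi : i ∈ T
      · simp only [hi, and_true]
        rw [Finset.sum_ite_eq' Finset.univ js (fun _ => (1:ℕ))]
        simp
      · simp [hi]
    rw [this, hptR i]
  · intro j
    dsimp only
    rw [Finset.sum_add_distrib, hA'col j]
    by_cases hj : j = js
    · subst hj
      have h1 : S' j = 0 := by simp [hS'def]
      have h2 : ∑ i, (if j = j ∧ i ∈ T then (1:ℕ) else 0) = s := by
        rw [← hsumT]
        exact Finset.sum_congr rfl fun i _ => by simp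
      rw [h1, h2]
      omega
    · have h2 : ∑ i, (if j = js ∧ i ∈ T then (1:ℕ) else 0) = 0 :=
        Finset.sum_eq_zero fun i _ => by simp [hj]
      rw [h2]
      simp [hS'def, hj]

lemma sum_rev {n : ℕ} (f : Fin n → ℕ) : ∑ j, f (Fin.rev j) = ∑ j, f j :=
  Fintype.sum_equiv Fin.revPerm _ _ (fun j => by rw [Fin.revPerm_apply])

/-- Forward direction: necessity. -/
theorem forward {m n : ℕ} (R : Fin m → ℕ) (S : Fin n → ℕ)
    (hsum : ∑ i, R i = ∑ j, S j)
    (A : Matrix (Fin m) (Fin n) ℕ)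
    (h01 : ∀ i j, A i j = 0 ∨ A i j = 1)
    (hrow : ∀ i, ∑ j, A i j = R i)
    (hcol : ∀ j, ∑ i, A i j = S j)
    (hrot : ∀ i j, A i j = A i.rev j.rev) :
    (∀ i, R i = R i.rev) ∧ (∀ j, S j = S j.rev) ∧
      MajorizedBy (vecMS S) (conjMS (vecMS R)) := by
  classical
  refine ⟨?_, ?_, ?_, ?_⟩
  · intro i
    rw [← hrow, ← hrow]
    calc ∑ j, A i j = ∑ j, A i.rev j.rev := Finset.sum_congr rfl (fun j _ => hrot i j)
    _ = ∑ j, A i.rev j := sum_rev _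
  · intro j
    rw [← hcol, ← hcol]
    calc ∑ i, A i j = ∑ i, A i.rev j.rev := Finset.sum_congr rfl (fun i _ => hrot i j)
    _ = ∑ i, A i j.rev := by
        exact Fintype.sum_equiv Fin.revPerm _ _ (fun i => by rw [Fin.revPerm_apply])
  · rw [conjMS_sum, vecMS_sum, vecMS_sum, hsum]
  · intro k
    rw [topSum_conj, msum_vecMS]
    refine topSum_le_of_forall fun T hT hc => ?_
    obtain ⟨J, hJ, rfl⟩ := exists_le_of_le_map T _ hT
    have hnodup : J.Nodup := Multiset.nodup_of_le hJ Finset.univ.nodup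
    set Jf : Finset (Fin n) := ⟨J, hnodup⟩ with hJf
    have hcard : Jf.card ≤ k := by
      rw [Finset.card_mk]
      rwa [Multiset.card_map] at hc
    have hsum1 : (J.map S).sum = ∑ j ∈ Jf, S j := rfl
    rw [hsum1]
    have h2 : ∑ j ∈ Jf, S j = ∑ i, ∑ j ∈ Jf, A i j := by
      exact (Finset.sum_congr rfl fun j _ => (hcol j).symm).trans Finset.sum_comm
    rw [h2]
    refine Finset.sum_le_sum fun i _ => le_min ?_ ?_
    · rw [← hrow i]
      exact Finset.sum_le_sum_of_subset (Finset.subset_univ Jf)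
    · calc ∑ j ∈ Jf, A i j ≤ ∑ j ∈ Jf, 1 :=
          Finset.sum_le_sum fun j _ => by rcases h01 i j with h | h <;> omega
      _ = Jf.card := by rw [Finset.sum_const, smul_eq_mul, mul_one]
      _ ≤ k := hcard

/-- Backward direction: construction, in `p+p`, `q+q` form. -/
theorem construct {p q : ℕ} (R : Fin (p+p) → ℕ) (S : Fin (q+q) → ℕ)
    (hsum : ∑ i, R i = ∑ j, S j) (hSle : ∀ j, S j ≤ p + p)
    (hRpal : ∀ i, R i = R i.rev) (hSpal : ∀ j, S j = S j.rev)
    (hmaj : ∀ k, topSum (vecMS S) k ≤ ∑ i, min (R i) k) :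
    ∃ A : Matrix (Fin (p+p)) (Fin (q+q)) ℕ,
      (∀ i j, A i j = 0 ∨ A i j = 1) ∧ (∀ i, ∑ j, A i j = R i) ∧
      (∀ j, ∑ i, A i j = S j) ∧ (∀ i j, A i j = A i.rev j.rev) := by
  classical
  set r : Fin p → ℕ := fun i => R (Fin.castAdd p i) with hrdef
  set c : Fin (q+q) → ℕ := fun j => if (j:ℕ) < q then (S j + 1)/2 else S j / 2 with hcdef
  have hrevq : ∀ j : Fin (q+q), ((Fin.rev j : Fin (q+q)) : ℕ) = q + q - (j + 1) :=
    fun j => Fin.val_rev j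
  have hcle2 : ∀ j, c j ≤ (S j + 1) / 2 := by
    intro j
    rw [hcdef]
    dsimp only
    split <;> omega
  have hcpair : ∀ j, c j + c (Fin.rev j) = S j := by
    intro j
    have hS := hSpal j
    have hj2 := j.isLt
    by_cases hj : (j : ℕ) < q
    · have hr : ¬ ((Fin.rev j : Fin (q+q)) : ℕ) < q := by rw [hrevq]; omega
      rw [hcdef]
      dsimp only
      rw [if_pos hj, if_neg hr, ← hS]
      omega
    · have hr : ((Fin.rev j : Fin (q+q)) : ℕ) < q := by rw [hrevq]; omega
      rw [hcdef]
      dsimp only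
      rw [if_neg hj, if_pos hr, ← hS]
      omega
  have hrevcast : ∀ i : Fin p, Fin.rev (Fin.natAdd p i) = Fin.castAdd p (Fin.rev i) := by
    intro i
    have h1 := i.isLt
    apply Fin.ext
    rw [Fin.val_rev, Fin.coe_castAdd, Fin.val_rev]
    simp only [Fin.coe_natAdd]
    omega
  have hRnat : ∀ i : Fin p, R (Fin.natAdd p i) = r (Fin.rev i) := by
    intro i
    rw [hRpal (Fin.natAdd p i), hrevcast i]
  have hRsum2 : ∑ i : Fin p, r i + ∑ i : Fin p, r i = ∑ i, R i := by
    rw [Fin.sum_univ_add (f := R)]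
    congr 1
    rw [← sum_rev r]
    exact Finset.sum_congr rfl fun i _ => (hRnat i).symm
  have hcsum2 : ∑ j, c j + ∑ j, c j = ∑ j, S j := by
    have h1 : ∑ j, (c j + c (Fin.rev j)) = ∑ j, S j :=
      Finset.sum_congr rfl fun j _ => hcpair j
    rw [Finset.sum_add_distrib, sum_rev c] at h1
    exact h1
  have hhalfsum : ∑ i : Fin p, r i = ∑ j, c j := by omega
  have hcle : ∀ j, c j ≤ p := by
    intro j
    have h1 := hcle2 j
    have h2 := hSle j
    omega
  -- majorization for the half problem
  have hvsum : (vecMS S).sum = (vecMS R).sum := by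
    rw [vecMS_sum, vecMS_sum, hsum]
  have hdual1 : ∀ k, topSum (vecMS R) k ≤ msum (vecMS S) k := by
    refine dual_maj hvsum fun k => ?_
    rw [msum_vecMS]
    exact hmaj k
  have hdouble : vecMS r + vecMS r ≤ vecMS R := by
    set T1 : Multiset (Fin (p+p)) := Multiset.map (Fin.castAdd p) Finset.univ.val with hT1
    set T2 : Multiset (Fin (p+p)) := Multiset.map (Fin.natAdd p) Finset.univ.val with hT2
    have hinj1 : Function.Injective (Fin.castAdd p : Fin p → Fin (p+p)) := by
      intro a b h
      apply Fin.ext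
      have := congrArg Fin.val h
      simpa using this
    have hinj2 : Function.Injective (Fin.natAdd p : Fin p → Fin (p+p)) := by
      intro a b h
      apply Fin.ext
      have := congrArg Fin.val h
      simp only [Fin.coe_natAdd] at this
      omega
    have hnd : (T1 + T2).Nodup := by
      rw [Multiset.nodup_add]
      refine ⟨Multiset.Nodup.map hinj1 Finset.univ.nodup,
        Multiset.Nodup.map hinj2 Finset.univ.nodup, ?_⟩
      rw [Multiset.disjoint_left]
      intro a ha1 ha2
      obtain ⟨x, _, rfl⟩ := Multiset.mem_map.1 ha1
      obtain ⟨y, _, hy⟩ := Multiset.mem_map.1 ha2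
      have h1 := congrArg Fin.val hy
      have := x.isLt
      have := y.isLt
      simp only [Fin.coe_natAdd, Fin.coe_castAdd] at h1
      omega
    have hle : T1 + T2 ≤ Finset.univ.val :=
      (Multiset.le_iff_subset hnd).2 (fun a _ => Finset.mem_univ a)
    have hmapped := Multiset.map_le_map (f := R) hle
    rw [Multiset.map_add] at hmapped
    have e1 : Multiset.map R T1 = vecMS r := by
      rw [hT1, Multiset.map_map]
      rfl
    have e2 : Multiset.map R T2 = vecMS r := by
      rw [hT2, Multiset.map_map]
      have e3 : Multiset.map (R ∘ Fin.natAdd p) Finset.univ.val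
          = Multiset.map (r ∘ Fin.rev) Finset.univ.val :=
        Multiset.map_congr rfl fun i _ => hRnat i
      rw [e3, ← Multiset.map_map]
      congr 1
      refine Multiset.eq_of_le_of_card_le ?_ ?_
      · refine (Multiset.le_iff_subset (Multiset.Nodup.map Fin.rev_injective
          Finset.univ.nodup)).2 (fun a _ => Finset.mem_univ a)
      · rw [Multiset.card_map]
    rw [e1, e2] at hmapped
    exact hmapped
  have hhalfmaj1 : ∀ k, topSum (vecMS r) k ≤ msum (vecMS c) k := by
    intro k
    obtain ⟨T, hTle, hTcard, hTsum⟩ := exists_top (vecMS r) k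
    have h1 : topSum (vecMS r) k + topSum (vecMS r) k ≤ topSum (vecMS R) (k + k) := by
      rw [← hTsum, ← Multiset.sum_add]
      refine sum_le_topSum _ _ _ (le_trans (add_le_add hTle hTle) hdouble) ?_
      rw [Multiset.card_add]
      omega
    have h2 : msum (vecMS S) (k + k) = msum (vecMS c) k + msum (vecMS c) k := by
      rw [msum_vecMS, msum_vecMS]
      have h3 : ∑ j, (min (c j) k + min (c (Fin.rev j)) k) = ∑ j, min (S j) (k + k) := by
        refine Finset.sum_congr rfl fun j _ => ?_
        have p1 := hcpair j
        have p2 := hcle2 j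
        have p3 := hcle2 (Fin.rev j)
        rw [← hSpal j] at p3
        omega
      rw [Finset.sum_add_distrib, sum_rev (fun j => min (c j) k)] at h3
      omega
    have h4 := hdual1 (k + k)
    omega
  have hhalfmaj : ∀ k, topSum (vecMS c) k ≤ ∑ i : Fin p, min (r i) k := by
    intro k
    have := dual_maj (A := vecMS r) (B := vecMS c)
      (by rw [vecMS_sum, vecMS_sum, hhalfsum]) hhalfmaj1 k
    rwa [msum_vecMS] at this
  obtain ⟨B, hB01, hBrow, hBcol⟩ := GR (∑ j, c j) r c rfl hcle hhalfsum hhalfmaj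
  have hrevlt : ∀ i : Fin (p+p), ¬ ((i:ℕ) < p) → ((Fin.rev i : Fin (p+p)) : ℕ) < p := by
    intro i h
    have := i.isLt
    rw [Fin.val_rev]
    omega
  refine ⟨fun i j => if h : (i : ℕ) < p then B ⟨(i:ℕ), h⟩ j
      else B ⟨((Fin.rev i : Fin (p+p)) : ℕ), hrevlt i h⟩ (Fin.rev j), ?_, ?_, ?_, ?_⟩
  · intro i j
    dsimp only
    split
    · exact hB01 _ _
    · exact hB01 _ _
  · intro i
    dsimp only
    by_cases h : (i : ℕ) < p
    · simp only [dif_pos h]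
      rw [hBrow ⟨(i:ℕ), h⟩]
      exact congrArg R (Fin.ext (by simp))
    · simp only [dif_neg h]
      have h1 : ∑ j, B ⟨((Fin.rev i : Fin (p+p)) : ℕ), hrevlt i h⟩ (Fin.rev j)
          = ∑ j, B ⟨((Fin.rev i : Fin (p+p)) : ℕ), hrevlt i h⟩ j :=
        sum_rev _
      rw [h1, hBrow]
      rw [hRpal i]
      exact congrArg R (Fin.ext (by simp))
  · intro j
    dsimp only
    rw [Fin.sum_univ_add (f := fun i : Fin (p+p) => if h : (i : ℕ) < p then B ⟨(i:ℕ), h⟩ j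
      else B ⟨((Fin.rev i : Fin (p+p)) : ℕ), hrevlt i h⟩ (Fin.rev j))]
    have e1 : ∀ i : Fin p, (if h : ((Fin.castAdd p i : Fin (p+p)) : ℕ) < p
        then B ⟨((Fin.castAdd p i : Fin (p+p)) : ℕ), h⟩ j
        else B ⟨((Fin.rev (Fin.castAdd p i) : Fin (p+p)) : ℕ), hrevlt _ h⟩ (Fin.rev j))
        = B i j := by
      intro i
      rw [dif_pos (by simp)]
      exact congrArg (fun x => B x j) (Fin.ext (by simp))
    have e2 : ∀ i : Fin p, (if h : ((Fin.natAdd p i : Fin (p+p)) : ℕ) < p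
        then B ⟨((Fin.natAdd p i : Fin (p+p)) : ℕ), h⟩ j
        else B ⟨((Fin.rev (Fin.natAdd p i) : Fin (p+p)) : ℕ), hrevlt _ h⟩ (Fin.rev j))
        = B (Fin.rev i) (Fin.rev j) := by
      intro i
      have hnot : ¬ ((Fin.natAdd p i : Fin (p+p)) : ℕ) < p := by
        simp only [Fin.coe_natAdd]
        omega
      rw [dif_neg hnot]
      refine congrArg (fun x => B x (Fin.rev j)) (Fin.ext ?_)
      simpa using congrArg Fin.val (hrevcast i)
    rw [Finset.sum_congr rfl (fun i _ => e1 i), Finset.sum_congr rfl (fun i _ => e2 i)]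
    have e3 : ∑ i : Fin p, B (Fin.rev i) (Fin.rev j) = ∑ i : Fin p, B i (Fin.rev j) :=
      Fintype.sum_equiv Fin.revPerm _ _ (fun i => by rw [Fin.revPerm_apply])
    rw [e3, hBcol, hBcol]
    exact hcpair j
  · intro i j
    dsimp only
    by_cases h : (i : ℕ) < p
    · have h' : ¬ ((Fin.rev i : Fin (p+p)) : ℕ) < p := by
        rw [Fin.val_rev]
        have := i.isLt
        omega
      rw [dif_pos h, dif_neg h']
      congr 1
      · exact Fin.ext (by simp [Fin.rev_rev])
      · exact (Fin.rev_rev j).symm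
    · have h' : ((Fin.rev i : Fin (p+p)) : ℕ) < p := hrevlt i h
      rw [dif_neg h, dif_pos h']

end CGR

/-- **ρ_π-invariant (0,1)-matrices, both dimensions even (Gale–Ryser analogue).**
For even `m`, `n`, the class `𝒜^π(R,S)` is nonempty iff `R`, `S` are
palindromic and `S ⪯ R*`. -/
theorem centrosymmetric_zeroOne_even_even (m n : ℕ)
    (hm : m % 2 = 0) (hn : n % 2 = 0) (hm0 : 0 < m) (hn0 : 0 < n)
    (R : Fin m → ℕ) (S : Fin n → ℕ)
    (hsum : ∑ i, R i = ∑ j, S j)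
    (hRle : ∀ i, R i ≤ n) (hSle : ∀ j, S j ≤ m) :
    (∃ A : Matrix (Fin m) (Fin n) ℕ,
        (∀ i j, A i j = 0 ∨ A i j = 1) ∧
        (∀ i, ∑ j, A i j = R i) ∧
        (∀ j, ∑ i, A i j = S j) ∧
        (∀ i j, A i j = A i.rev j.rev)) ↔
      ((∀ i, R i = R i.rev) ∧ (∀ j, S j = S j.rev) ∧
        MajorizedBy (vecMS S) (conjMS (vecMS R))) := by
  constructor
  · rintro ⟨A, h01, hrow, hcol, hrot⟩
    exact CGR.forward R S hsum A h01 hrow hcol hrot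
  · rintro ⟨hRpal, hSpal, _, hmaj⟩
    obtain ⟨p, rfl⟩ : ∃ p, m = p + p := ⟨m / 2, by omega⟩
    obtain ⟨q, rfl⟩ : ∃ q, n = q + q := ⟨n / 2, by omega⟩
    have hmaj' : ∀ k, topSum (vecMS S) k ≤ ∑ i, min (R i) k := by
      intro k
      have := hmaj k
      rwa [CGR.topSum_conj, CGR.msum_vecMS] at this
    exact CGR.construct R S hsum hSle hRpal hSpal hmaj'
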